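/- With the trumpet setup below, for every real α and every r with 0 < r < r₀ one has u_α(r) + (2/(n−2))·r·w(r) > α. -/

import Mathlib

open MeasureTheory Set

noncomputable def u1' (n : ℕ) (s : ℝ) : ℝ := ((2 - (n : ℝ)) / 2) * s ^ (-(n : ℝ) / 2)

noncomputable def u2' (n : ℕ) (s : ℝ) : ℝ := (2 - (n : ℝ)) * s ^ (1 - (n : ℝ))

noncomputable def w (n : ℕ) (ζ : ℝ → ℝ) (s : ℝ) : ℝ :=
  ζ s * u1' n s + (1 - ζ s) * u2' n s

noncomputable def uA (n : ℕ) (ζ : ℝ → ℝ) (r₀ α r : ℝ) : ℝ :=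
  α + r₀ ^ ((2 - (n : ℝ)) / 2) - ∫ s in Set.Ioi r, w n ζ s

theorem stmt_15 (n : ℕ) (hn : 3 ≤ n) (r₀ : ℝ) (hr₀ : 0 < r₀)
    (hr₀2 : 2 * r₀ < (2 : ℝ) ^ ((2 : ℝ) / ((n : ℝ) - 2)))
    (ζ : ℝ → ℝ) (hζC : ContDiff ℝ 1 ζ) (hζ01 : ∀ r : ℝ, 0 ≤ ζ r ∧ ζ r ≤ 1)
    (hζone : ∀ r : ℝ, r ≤ r₀ → ζ r = 1) (hζzero : ∀ r : ℝ, 2 * r₀ ≤ r → ζ r = 0)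
    (hζder : ∀ r : ℝ, deriv ζ r ≤ 0)
    (α : ℝ) (r : ℝ) (hr0 : 0 < r) (hr : r < r₀) :
    uA n ζ r₀ α r + (2 / ((n : ℝ) - 2)) * r * w n ζ r > α := by
  have hn2 : (2 : ℝ) < n := by
    have : (3 : ℝ) ≤ n := by exact_mod_cast hn
    linarith
  set c : ℝ := (2 - (n : ℝ)) / 2 with hc
  have hr2 : r < 2 * r₀ := by linarith
  -- negativity of w on positives
  have h1neg : ∀ s : ℝ, 0 < s → u1' n s < 0 := by
    intro s hs
    exact mul_neg_of_neg_of_pos (by linarith) (Real.rpow_pos_of_pos hs _)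
  have h2neg : ∀ s : ℝ, 0 < s → u2' n s < 0 :=
    fun s hs => mul_neg_of_neg_of_pos (by linarith) (Real.rpow_pos_of_pos hs _)
  have hwneg : ∀ s : ℝ, 0 < s → w n ζ s < 0 := by
    intro s hs
    have h1 := h1neg s hs
    have h2 := h2neg s hs
    have ht0 := (hζ01 s).1
    have ht1 := (hζ01 s).2
    unfold w
    rcases le_total (u1' n s) (u2' n s) with h | h
    · nlinarith [mul_le_mul_of_nonneg_left h ht0]
    · nlinarith [mul_le_mul_of_nonneg_left h (by linarith : 0 ≤ 1 - ζ s)]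
  -- continuity of w on Ici r
  have hrpowc : ∀ e : ℝ, ContinuousOn (fun s : ℝ => s ^ e) {(0:ℝ)}ᶜ := by
    intro e s hs
    exact (Real.continuousAt_rpow_const s e (Or.inl hs)).continuousWithinAt
  have hwcont : ContinuousOn (w n ζ) {(0:ℝ)}ᶜ := by
    unfold w u1' u2'
    exact (hζC.continuous.continuousOn.mul (continuousOn_const.mul (hrpowc _))).add
      ((continuousOn_const.sub hζC.continuous.continuousOn).mul
        (continuousOn_const.mul (hrpowc _)))
  have hsub : ∀ {a : ℝ}, 0 < a → Ici a ⊆ ({(0:ℝ)}ᶜ : Set ℝ) := by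
    intro a ha s hs
    simp only [mem_compl_iff, mem_singleton_iff]
    have : (0:ℝ) < s := lt_of_lt_of_le ha hs
    linarith
  -- integrability of w on Ioi b for r ≤ b
  have hIntu2 : IntegrableOn (u2' n) (Ioi (2 * r₀)) := by
    have h := integrableOn_Ioi_rpow_of_lt (a := 1 - (n:ℝ)) (by linarith) (by linarith : (0:ℝ) < 2 * r₀)
    exact h.const_mul _
  have hInt : ∀ b : ℝ, r ≤ b → b ≤ 2 * r₀ → IntegrableOn (w n ζ) (Ioi b) := by
    intro b hb hb2
    have hb0 : 0 < b := lt_of_lt_of_le hr0 hb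
    have hsplit : Ioc b (2 * r₀) ∪ Ioi (2 * r₀) = Ioi b :=
      Ioc_union_Ioi_eq_Ioi hb2
    rw [← hsplit]
    apply IntegrableOn.union
    · refine ((hwcont.mono ?_).integrableOn_Icc).mono_set Ioc_subset_Icc_self
      intro s hs
      have hs0 : 0 < s := lt_of_lt_of_le hb0 hs.1
      simp only [mem_compl_iff, mem_singleton_iff]
      exact ne_of_gt hs0
    · apply (hIntu2.congr_fun (fun s hs => ?_) measurableSet_Ioi)
      unfold w
      rw [hζzero s (le_of_lt hs)]
      ring
  have hIntr := hInt r le_rfl (by linarith)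
  have hIntr₀ := hInt r₀ hr.le (by linarith)
  -- split the integral
  have hsplit : (∫ s in Ioi r, w n ζ s) =
      (∫ s in Ioc r r₀, w n ζ s) + ∫ s in Ioi r₀, w n ζ s := by
    rw [← setIntegral_union (Ioc_disjoint_Ioi le_rfl) measurableSet_Ioi
      (hIntr.mono_set (Ioc_subset_Ioi_self.trans (Ioi_subset_Ioi le_rfl))) hIntr₀,
      Ioc_union_Ioi_eq_Ioi hr.le]
  -- compute the first piece by FTC
  have hfirst : (∫ s in Ioc r r₀, w n ζ s) = r₀ ^ c - r ^ c := by
    have heq : ∀ s ∈ Ioc r r₀, w n ζ s = u1' n s := by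
      intro s hs
      unfold w
      rw [hζone s hs.2]
      ring
    rw [setIntegral_congr_fun measurableSet_Ioc heq, ← intervalIntegral.integral_of_le hr.le]
    apply intervalIntegral.integral_eq_sub_of_hasDerivAt (f := fun s => s ^ c)
    · intro s hs
      rw [uIcc_of_le hr.le] at hs
      have hs0 : s ≠ 0 := ne_of_gt (lt_of_lt_of_le hr0 hs.1)
      have h := Real.hasDerivAt_rpow_const (p := c) (Or.inl hs0)
      refine h.congr_deriv ?_
      unfold u1'
      rw [show c - 1 = -(n:ℝ)/2 by unfold c; ring, hc]
    · apply ContinuousOn.intervalIntegrable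
      rw [uIcc_of_le hr.le]
      unfold u1'
      refine continuousOn_const.mul ((hrpowc _).mono ?_)
      intro s hs
      simp only [mem_compl_iff, mem_singleton_iff]
      exact ne_of_gt (lt_of_lt_of_le hr0 hs.1)
  -- second piece is negative
  have hI2neg : (∫ s in Ioi r₀, w n ζ s) < 0 := by
    have hpos : (0:ℝ) < ∫ s in Ioi r₀, -(w n ζ s) := by
      rw [setIntegral_pos_iff_support_of_nonneg_ae]
      · have hsup : (Function.support fun s => -(w n ζ s)) ∩ Ioi r₀ = Ioi r₀ := by
          apply inter_eq_right.2
          intro s hs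
          have := hwneg s (lt_trans hr₀ hs)
          simp only [Function.mem_support, neg_ne_zero]
          exact ne_of_lt this
        rw [hsup, Real.volume_Ioi]
        exact ENNReal.zero_lt_top
      · rw [Filter.EventuallyLE, ae_restrict_iff' measurableSet_Ioi]
        filter_upwards with s hs
        have := hwneg s (lt_trans hr₀ hs)
        simp only [Pi.zero_apply]
        linarith
      · exact hIntr₀.neg
    rw [integral_neg] at hpos
    linarith
  -- identify w at r and last term
  have hwr : w n ζ r = u1' n r := by
    unfold w
    rw [hζone r hr.le]
    ring
  have hterm : (2 / ((n:ℝ) - 2)) * r * w n ζ r = -(r ^ c) := by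
    rw [hwr]
    unfold u1'
    have h1 : r * r ^ (-(n:ℝ)/2) = r ^ c := by
      calc r * r ^ (-(n:ℝ)/2) = r ^ (1:ℝ) * r ^ (-(n:ℝ)/2) := by rw [Real.rpow_one]
      _ = r ^ (1 + -(n:ℝ)/2) := (Real.rpow_add hr0 _ _).symm
      _ = r ^ c := by norm_num [hc]; ring_nf
    have hne : (n:ℝ) - 2 ≠ 0 := by linarith
    field_simp
    rw [← neg_div]; linear_combination (2 - (n:ℝ)) * h1
  unfold uA
  rw [hsplit, hfirst, hterm, hc]
  linarith
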